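/- Let P(t) be a rational parametrization of C. The reparametrizing curve 𝔊(P) is reducible if and only if P(t) is A-rdf. -/

import Mathlib

noncomputable section

namespace ConchoidPaper

open Polynomial

variable {K : Type*} [Field K]

/-- The squared norm `‖P‖² = b(P,P)` for the bilinear form
`b((x₁,x₂),(y₁,y₂)) = x₁y₁ + x₂y₂` on `K²`. -/
def normSq (P : K × K) : K := P.1 * P.1 + P.2 * P.2

/-- The zero set in `K²` of a bivariate polynomial (variables `X 0 ↦ y₁`, `X 1 ↦ y₂`). -/
def zeroSet (f : MvPolynomial (Fin 2) K) : Set (K × K) :=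
  {x | MvPolynomial.eval ![x.1, x.2] f = 0}

/-- Zariski closure in `K²`: the set of points at which every polynomial
vanishing identically on `S` vanishes. -/
def zClosure (S : Set (K × K)) : Set (K × K) :=
  {x | ∀ f : MvPolynomial (Fin 2) K,
      (∀ y ∈ S, MvPolynomial.eval ![y.1, y.2] f = 0) →
      MvPolynomial.eval ![x.1, x.2] f = 0}

/-- `S` is Zariski closed in `K²`. -/
def IsZClosed (S : Set (K × K)) : Prop := zClosure S ⊆ S

/-- `S` is irreducible for the Zariski topology on `K²`: it is nonempty and is not
covered by two Zariski-closed sets unless it is contained in one of them. -/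
def IsZIrreducible (S : Set (K × K)) : Prop :=
  S.Nonempty ∧
  ∀ F₁ F₂ : Set (K × K), IsZClosed F₁ → IsZClosed F₂ → S ⊆ F₁ ∪ F₂ → S ⊆ F₁ ∨ S ⊆ F₂

/-- `M` is an irreducible component of `X`: a maximal Zariski-closed irreducible subset. -/
def IsComponent (X M : Set (K × K)) : Prop :=
  M ⊆ X ∧ IsZClosed M ∧ IsZIrreducible M ∧
  ∀ M' : Set (K × K), M' ⊆ X → IsZClosed M' → IsZIrreducible M' → M ⊆ M' → M' = M

/-- `Ω` is a nonempty Zariski-dense subset of `M`. -/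
def IsDenseIn (Ω M : Set (K × K)) : Prop :=
  Ω.Nonempty ∧ Ω ⊆ M ∧ M ⊆ zClosure Ω

/-- The conchoid incidence variety `B(C)` of the curve `C = zeroSet f` from the focus `A`
at distance `d`: triples `(x̄, ȳ, λ)` with `f(ȳ) = 0`, `‖x̄ − ȳ‖² = d²` and
`x̄ = A + λ(ȳ − A)`. -/
def incidence (f : MvPolynomial (Fin 2) K) (A : K × K) (d : K) :
    Set ((K × K) × (K × K) × K) :=
  {w | w.2.1 ∈ zeroSet f ∧ normSq (w.1 - w.2.1) = d ^ 2 ∧ w.1 = A + w.2.2 • (w.2.1 - A)}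

/-- The conchoid `𝔠(C,A,d)`: the Zariski closure of `π₁(B(C))`. -/
def conchoid (f : MvPolynomial (Fin 2) K) (A : K × K) (d : K) : Set (K × K) :=
  zClosure (Prod.fst '' incidence f A d)

/-- `S` is one of the two isotropic lines `y₁ ± √(-1) y₂ = 0`. -/
def IsIsotropicLine (S : Set (K × K)) : Prop :=
  ∃ s : K, s ^ 2 = -1 ∧ S = {y : K × K | y.1 + s * y.2 = 0}

/-- `S` is a line passing through the point `A`. -/
def IsLineThrough (S : Set (K × K)) (A : K × K) : Prop :=
  ∃ u v : K, (u ≠ 0 ∨ v ≠ 0) ∧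
    S = {y : K × K | u * (y.1 - A.1) + v * (y.2 - A.2) = 0}

/-- `S` is a line in `K²`. -/
def IsLine (S : Set (K × K)) : Prop :=
  ∃ u v w : K, (u ≠ 0 ∨ v ≠ 0) ∧ S = {y : K × K | u * y.1 + v * y.2 + w = 0}

/-- The circle of center `A` and radius `d`, i.e. `‖ȳ − A‖² = d²`. -/
def circleSet (A : K × K) (d : K) : Set (K × K) := {y : K × K | normSq (y - A) = d ^ 2}

/-- The point of `K²` obtained by evaluating the pair of rational functions `P` at `t`. -/
def ratPoint (P : RatFunc K × RatFunc K) (t : K) : K × K :=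
  (P.1.num.eval t / P.1.denom.eval t, P.2.num.eval t / P.2.denom.eval t)

/-- `t` avoids the poles of both components of `P`. -/
def PolesAvoided (P : RatFunc K × RatFunc K) (t : K) : Prop :=
  P.1.denom.eval t ≠ 0 ∧ P.2.denom.eval t ≠ 0

/-- The image of the pair of rational functions `P`, poles avoided. -/
def paramImage (P : RatFunc K × RatFunc K) : Set (K × K) :=
  {x | ∃ t : K, PolesAvoided P t ∧ x = ratPoint P t}

/-- `P ∈ K(t)²` is a rational parametrization of the set `S ⊆ K²`: its components are
not both constant, its image lies in `S`, and its image is Zariski dense in `S`. -/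
def IsParamOf (S : Set (K × K)) (P : RatFunc K × RatFunc K) : Prop :=
  (¬ ∃ c : K × K, P.1 = RatFunc.C c.1 ∧ P.2 = RatFunc.C c.2) ∧
  paramImage P ⊆ S ∧ S ⊆ zClosure (paramImage P)

/-- `S` is rational: it admits a rational parametrization. -/
def IsRationalSet (S : Set (K × K)) : Prop := ∃ P : RatFunc K × RatFunc K, IsParamOf S P

/-- `P` is proper: `K(P₁,P₂) = K(t)`. -/
def IsProper (P : RatFunc K × RatFunc K) : Prop :=
  IntermediateField.adjoin K {P.1, P.2} = ⊤

/-- `P` is at rational distance to the focus `A` (`A`-rdf):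
`(P₁ − a)² + (P₂ − b)² = m(t)²` for some rational function `m`. -/
def IsRDF (A : K × K) (P : RatFunc K × RatFunc K) : Prop :=
  ∃ m : RatFunc K, (P.1 - RatFunc.C A.1) ^ 2 + (P.2 - RatFunc.C A.2) ^ 2 = m ^ 2

/-- A field is trivially a normalized GCD monoid; this makes `K[x₁]` a normalized GCD
monoid, so that primitive parts w.r.t. `x₂` of polynomials in `K[x₁][x₂]` make sense. -/
noncomputable local instance : NormalizedGCDMonoid K := by
  classical
  letI : StrongNormalizedGCDMonoid K := inferInstance
  infer_instance

/-- The numerator of `−2x₂(P₁(x₁) − a) + (x₂² − 1)(P₂(x₁) − b)`, written as a polynomial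
in `x₂` (outer variable) with coefficients in `K[x₁]` (inner variable). -/
def repNum (A : K × K) (P : RatFunc K × RatFunc K) : Polynomial (Polynomial K) :=
  Polynomial.C ((P.2 - RatFunc.C A.2).num * (P.1 - RatFunc.C A.1).denom) *
      (Polynomial.X ^ 2 - 1) +
    Polynomial.C (-2 * ((P.1 - RatFunc.C A.1).num * (P.2 - RatFunc.C A.2).denom)) *
      Polynomial.X

/-- Defining polynomial of the reparametrizing curve `𝔊(P)`: the primitive part with
respect to `x₂` of the numerator of `−2x₂(P₁(x₁) − a) + (x₂² − 1)(P₂(x₁) − b)`. -/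
def repPoly (A : K × K) (P : RatFunc K × RatFunc K) : Polynomial (Polynomial K) :=
  (repNum A P).primPart

/-- Zero set in the `(x₁,x₂)`-plane of `g ∈ K[x₁][x₂]` (`x₂` outer, `x₁` inner). -/
def zeroSetP (g : Polynomial (Polynomial K)) : Set (K × K) :=
  {x | Polynomial.eval₂ (Polynomial.evalRingHom x.1) x.2 g = 0}

/-- The reparametrizing curve `𝔊(P)` has at least one rational component, i.e. some
irreducible factor of its defining polynomial defines a rational curve. -/
def repHasRatComponent (A : K × K) (P : RatFunc K × RatFunc K) : Prop :=
  ∃ g : Polynomial (Polynomial K), Irreducible g ∧ g ∣ repPoly A P ∧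
    IsRationalSet (zeroSetP g)

/-- The reparametrizing curve `𝔊(P)` is rational: its defining polynomial is
irreducible and its zero set admits a rational parametrization. -/
def repIsRational (A : K × K) (P : RatFunc K × RatFunc K) : Prop :=
  Irreducible (repPoly A P) ∧ IsRationalSet (zeroSetP (repPoly A P))

/-- Composition `P ∘ φ` of rational functions. -/
def comp (P φ : RatFunc K) : RatFunc K :=
  Polynomial.aeval φ P.num / Polynomial.aeval φ P.denom

/-- `M` is a simple component of the conchoid: an irreducible component possessing a
nonempty Zariski-dense subset `Ω` such that each `Q ∈ Ω` has exactly one point in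
`π₂(π₁⁻¹(Q))`. -/
def IsSimpleComponent (f : MvPolynomial (Fin 2) K) (A : K × K) (d : K)
    (M : Set (K × K)) : Prop :=
  IsComponent (conchoid f A d) M ∧
  ∃ Ω : Set (K × K), IsDenseIn Ω M ∧
    ∀ Q ∈ Ω, ∃! y : K × K, ∃ l : K, (Q, y, l) ∈ incidence f A d


/-! ### Auxiliary lemmas -/

lemma eval_aeval_line (f : MvPolynomial (Fin 2) K) (x c : K) :
    Polynomial.eval x
        (MvPolynomial.aeval ![(Polynomial.X : Polynomial K), Polynomial.C c] f)
      = MvPolynomial.eval ![x, c] f := by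
  induction f using MvPolynomial.induction_on with
  | C a => simp
  | add p q hp hq => simp [hp, hq]
  | mul_X p n hp => fin_cases n <;> simp [hp]

lemma image_infinite [CharZero K] {r : RatFunc K} (hr : ∀ c : K, r ≠ RatFunc.C c) :
    {x : K | ∃ t : K, r.denom.eval t ≠ 0 ∧ x = r.num.eval t / r.denom.eval t}.Infinite := by
  set S := {x : K | ∃ t : K, r.denom.eval t ≠ 0 ∧ x = r.num.eval t / r.denom.eval t} with hS
  by_contra hfin
  rw [Set.not_infinite] at hfin
  have hTinf : {t : K | r.denom.eval t ≠ 0}.Infinite := by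
    have hfin2 : {t : K | r.denom.eval t = 0}.Finite :=
      Polynomial.finite_setOf_isRoot r.denom_ne_zero
    have := hfin2.infinite_compl
    simpa [Set.compl_setOf] using this
  have hsub : {t : K | r.denom.eval t ≠ 0} ⊆
      ⋃ c ∈ S, {t : K | (r.num - Polynomial.C c * r.denom).eval t = 0} := by
    intro t ht
    refine Set.mem_biUnion
      (show (r.num.eval t / r.denom.eval t) ∈ S from ⟨t, ht, rfl⟩) ?_
    simp only [Set.mem_setOf_eq, Polynomial.eval_sub, Polynomial.eval_mul, Polynomial.eval_C]
    rw [div_mul_cancel₀ _ (show r.denom.eval t ≠ 0 from ht), sub_self]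
  have hfib : ∀ c ∈ S, {t : K | (r.num - Polynomial.C c * r.denom).eval t = 0}.Finite := by
    intro c _
    apply Polynomial.finite_setOf_isRoot
    intro h0
    have hnum : r.num = Polynomial.C c * r.denom := by rwa [sub_eq_zero] at h0
    apply hr c
    rw [← RatFunc.num_div_denom r, hnum, map_mul, RatFunc.algebraMap_C,
      mul_div_assoc, div_self (RatFunc.algebraMap_ne_zero r.denom_ne_zero), mul_one]
  exact hTinf (Set.Finite.subset (hfin.biUnion hfib) hsub)

lemma snd_sub_ne_zero [CharZero K] (f : MvPolynomial (Fin 2) K) (A : K × K)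
    (hline : ¬ IsLineThrough (zeroSet f) A)
    (P : RatFunc K × RatFunc K) (hP : IsParamOf (zeroSet f) P) :
    P.2 - RatFunc.C A.2 ≠ 0 := by
  rw [sub_ne_zero]
  intro hconst
  have hP1 : ∀ c : K, P.1 ≠ RatFunc.C c := fun c hc => hP.1 ⟨(c, A.2), hc, hconst⟩
  have hsecond : ∀ t : K, (ratPoint P t).2 = A.2 := by
    intro t
    simp [ratPoint, hconst, RatFunc.num_C, RatFunc.denom_C]
  set p : Polynomial K :=
    MvPolynomial.aeval ![(Polynomial.X : Polynomial K), Polynomial.C A.2] f with hp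
  have hproots :
      {x : K | ∃ t : K, P.1.denom.eval t ≠ 0 ∧ x = P.1.num.eval t / P.1.denom.eval t}
        ⊆ {z : K | p.IsRoot z} := by
    rintro z ⟨t, ht, rfl⟩
    have hpt : PolesAvoided P t := ⟨ht, by simp [hconst, RatFunc.denom_C]⟩
    have hmem : ratPoint P t ∈ zeroSet f := hP.2.1 ⟨t, hpt, rfl⟩
    have h2 := hsecond t
    have hz : MvPolynomial.eval ![(ratPoint P t).1, A.2] f = 0 := by
      rw [← h2]; exact hmem
    have : p.eval (ratPoint P t).1 = 0 := by rw [hp, eval_aeval_line]; exact hz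
    simpa [Polynomial.IsRoot, ratPoint] using this
  have hp0 : p = 0 :=
    Polynomial.eq_zero_of_infinite_isRoot p ((image_infinite hP1).mono hproots)
  apply hline
  refine ⟨0, 1, Or.inr one_ne_zero, ?_⟩
  ext x
  simp only [Set.mem_setOf_eq, zero_mul, one_mul, zero_add]
  constructor
  · intro hx
    have hcl := hP.2.2 hx (MvPolynomial.X 1 - MvPolynomial.C A.2) ?_
    · simpa using hcl
    · rintro y ⟨t, hpole, rfl⟩
      have h2 := hsecond t
      simp [h2]
  · intro hx
    have hx2 : x.2 = A.2 := sub_eq_zero.mp hx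
    show MvPolynomial.eval ![x.1, x.2] f = 0
    rw [hx2, ← eval_aeval_line, ← hp, hp0, Polynomial.eval_zero]

/-- Quadratic criterion over a field of characteristic zero. -/
lemma quad_criterion {F : Type*} [Field F] [CharZero F] (u v : F) (hu : u ≠ 0) :
    ¬ Irreducible (Polynomial.C u * (Polynomial.X ^ 2 - 1) +
        Polynomial.C (-2 * v) * Polynomial.X)
      ↔ ∃ m : F, v ^ 2 + u ^ 2 = m ^ 2 := by
  set Q : Polynomial F :=
    Polynomial.C u * (Polynomial.X ^ 2 - 1) + Polynomial.C (-2 * v) * Polynomial.X with hQ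
  set M : Polynomial F :=
    Polynomial.X ^ 2 + Polynomial.C (-2 * v / u) * Polynomial.X + Polynomial.C (-1) with hM
  have hQM : Q = Polynomial.C u * M := by
    have h1 : (-2 * v : F) = u * (-2 * v / u) := by field_simp
    rw [hQ, hM]
    conv_lhs => rw [h1]
    simp only [map_mul, map_neg, map_one]
    ring
  have hMmonic : M.Monic := by
    rw [hM, add_assoc]
    exact Polynomial.monic_X_pow_add
      (lt_of_le_of_lt (Polynomial.degree_linear_le) (by decide))
  have hMdeg : M.natDegree = 2 := by
    have hM' : M = Polynomial.C 1 * Polynomial.X ^ 2 +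
        Polynomial.C (-2 * v / u) * Polynomial.X + Polynomial.C (-1) := by
      rw [hM]; simp
    rw [hM']
    exact Polynomial.natDegree_quadratic one_ne_zero
  have hc0 : M.coeff 0 = -1 := by
    rw [hM]; simp
  have hc1 : M.coeff 1 = -2 * v / u := by
    rw [hM]; simp [Polynomial.coeff_one]
  have hIrrIff : Irreducible Q ↔ Irreducible M := by
    have hunit : IsUnit (Polynomial.C u) := Polynomial.isUnit_C.mpr (isUnit_iff_ne_zero.mpr hu)
    have hassoc : Associated M Q := ⟨hunit.unit, by rw [IsUnit.unit_spec, hQM, mul_comm]⟩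
    exact hassoc.irreducible_iff.symm
  rw [hIrrIff, hMmonic.not_irreducible_iff_exists_add_mul_eq_coeff hMdeg]
  constructor
  · rintro ⟨c₁, c₂, h1, h2⟩
    rw [hc0] at h1
    rw [hc1] at h2
    have h2' : -2 * v = (c₁ + c₂) * u := (div_eq_iff hu).mp h2
    refine ⟨u * (c₁ - c₂) / 2, ?_⟩
    field_simp
    linear_combination (-(2 * v - u * (c₁ + c₂))) * h2' + (-4 * u ^ 2) * h1
  · rintro ⟨m, hm⟩
    refine ⟨(-v - m) / u, (-v + m) / u, ?_, ?_⟩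
    · rw [hc0]
      field_simp
      linear_combination -hm
    · rw [hc1]
      field_simp
      ring

/-- The reparametrizing polynomial is irreducible iff the corresponding quadratic over
`K(t)` is irreducible. -/
lemma repPoly_irreducible_iff (A : K × K) (P : RatFunc K × RatFunc K)
    (hu : P.2 - RatFunc.C A.2 ≠ 0) :
    Irreducible (repPoly A P) ↔
      Irreducible (Polynomial.C (P.2 - RatFunc.C A.2) * (Polynomial.X ^ 2 - 1) +
        Polynomial.C (-2 * (P.1 - RatFunc.C A.1)) * Polynomial.X) := by
  set u : RatFunc K := P.2 - RatFunc.C A.2 with hudef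
  set v : RatFunc K := P.1 - RatFunc.C A.1 with hvdef
  set alg : Polynomial K →+* RatFunc K := algebraMap (Polynomial K) (RatFunc K) with halg
  set Q : Polynomial (RatFunc K) :=
    Polynomial.C u * (Polynomial.X ^ 2 - 1) + Polynomial.C (-2 * v) * Polynomial.X with hQ
  have hdu : alg u.denom ≠ 0 := RatFunc.algebraMap_ne_zero u.denom_ne_zero
  have hdv : alg v.denom ≠ 0 := RatFunc.algebraMap_ne_zero v.denom_ne_zero
  have hnu : alg u.num = u * alg u.denom := (div_eq_iff hdu).mp (RatFunc.num_div_denom u)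
  have hnv : alg v.num = v * alg v.denom := (div_eq_iff hdv).mp (RatFunc.num_div_denom v)
  set D : RatFunc K := alg u.denom * alg v.denom with hD
  have hDne : D ≠ 0 := mul_ne_zero hdu hdv
  have hmap : (repNum A P).map alg = Polynomial.C D * Q := by
    rw [repNum, hQ, hD, ← hudef, ← hvdef]
    simp only [Polynomial.map_add, Polynomial.map_mul, Polynomial.map_sub, Polynomial.map_pow,
      Polynomial.map_one, Polynomial.map_X, Polynomial.map_C, Polynomial.map_neg,
      Polynomial.map_ofNat, map_mul, map_neg, map_ofNat, hnu, hnv]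
    ring
  have hQcoeff : Q.coeff 2 = u := by
    rw [hQ]
    simp [Polynomial.coeff_X, Polynomial.coeff_one]
  have hQne : Q ≠ 0 := fun h => hu (by rw [hudef] at hQcoeff ⊢; rw [← hQcoeff, h]; simp)
  have hrepNum_ne : repNum A P ≠ 0 := by
    intro h0
    rw [h0, Polynomial.map_zero] at hmap
    rcases mul_eq_zero.mp hmap.symm with h | h
    · exact hDne (Polynomial.C_eq_zero.mp h)
    · exact hQne h
  have hcont : (repNum A P).content ≠ 0 := fun h =>
    hrepNum_ne (Polynomial.content_eq_zero_iff.mp h)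
  have hcontF : alg (repNum A P).content ≠ 0 := RatFunc.algebraMap_ne_zero hcont
  have hfactor : Polynomial.C (alg (repNum A P).content) * (repPoly A P).map alg =
      Polynomial.C D * Q := by
    rw [repPoly, ← Polynomial.map_C, ← Polynomial.map_mul,
      ← Polynomial.eq_C_content_mul_primPart, hmap]
  have hrepmap : (repPoly A P).map alg =
      Polynomial.C ((alg (repNum A P).content)⁻¹ * D) * Q := by
    apply mul_left_cancel₀ (b := (repPoly A P).map alg)
      (Polynomial.C_ne_zero.mpr hcontF)
    rw [hfactor, ← mul_assoc, ← Polynomial.C_mul, mul_inv_cancel_left₀ hcontF]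
  have he : (alg (repNum A P).content)⁻¹ * D ≠ 0 :=
    mul_ne_zero (inv_ne_zero hcontF) hDne
  have hprim : (repPoly A P).IsPrimitive := by
    rw [repPoly]; exact Polynomial.isPrimitive_primPart _
  have step1 : Irreducible (repPoly A P) ↔ Irreducible ((repPoly A P).map alg) :=
    hprim.irreducible_iff_irreducible_map_fraction_map
  have step2 : Irreducible ((repPoly A P).map alg) ↔ Irreducible Q := by
    have hunit : IsUnit (Polynomial.C ((alg (repNum A P).content)⁻¹ * D)) :=
      Polynomial.isUnit_C.mpr (isUnit_iff_ne_zero.mpr he)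
    have hassoc : Associated Q ((repPoly A P).map alg) :=
      ⟨hunit.unit, by rw [IsUnit.unit_spec, hrepmap, mul_comm]⟩
    exact hassoc.irreducible_iff.symm
  exact step1.trans step2

/-- Lemma 2 of the paper. The reparametrizing curve `𝔊(P)` is
reducible (its defining polynomial is not irreducible over `K`) iff `P` is `A`-rdf. -/
theorem repCurve_reducible_iff_rdf
    [IsAlgClosed K] [CharZero K]
    (f : MvPolynomial (Fin 2) K) (A : K × K)
    (hf : Irreducible f)
    (hiso : ¬ IsIsotropicLine (zeroSet f))
    (hline : ¬ IsLineThrough (zeroSet f) A)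
    (P : RatFunc K × RatFunc K) (hP : IsParamOf (zeroSet f) P) :
    ¬ Irreducible (repPoly A P) ↔ IsRDF A P := by
  have hchar : CharZero (RatFunc K) :=
    charZero_of_injective_algebraMap (algebraMap K (RatFunc K)).injective
  have hu : P.2 - RatFunc.C A.2 ≠ 0 := snd_sub_ne_zero f A hline P hP
  rw [repPoly_irreducible_iff A P hu,
    quad_criterion (P.2 - RatFunc.C A.2) (P.1 - RatFunc.C A.1) hu]
  rfl

end ConchoidPaper
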